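/- Let g, v : ℝ → ℝ be 2π-periodic with g continuous and v of class C¹, and assume the antiderivative G(θ) := ∫₀^θ g(φ)dφ is 2π-periodic. Let w and z be 2π-periodic L² functions whose Fourier coefficients satisfy ŵ(n) = −i·sign(n)·Ĝ(n) and ẑ(n) = −i·sign(n)·(v')^(n) for all n ∈ ℤ (i.e., w = 𝓗G and z = 𝓗v'). Then (1/2π)∫_{−π}^{π} g(θ)v(θ) dθ = −(1/2π)∫_{−π}^{π} w(θ)z(θ) dθ. Consequently, the gradient relative to the Kähler inner product b₂(a,b) := (1/2π)∫_{−π}^{π} a·(𝓗b') dθ of a functional with L²-functional derivative g is −𝓗(∫₀^θ g(φ)dφ). -/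

import Mathlib

open Real MeasureTheory intervalIntegral

/-- The `n`-th Fourier coefficient of a `2π`-periodic function `v : ℝ → ℝ`. -/
noncomputable def fourierCoef (v : ℝ → ℝ) (n : ℤ) : ℂ :=
  (1 / (2 * π) : ℝ) *
    ∫ θ in (-π : ℝ)..π, (v θ : ℂ) * Complex.exp (-Complex.I * n * θ)

namespace Stmt17Aux


open AddCircle Complex

instance fact2pi : Fact (0 < 2 * π) := ⟨by positivity⟩

/-- `F` restricted (pulled back) to `(-π, π]` agrees a.e. with `f`. -/
def Pr (f : ℝ → ℝ) (F : AddCircle (2 * π) → ℂ) : Prop :=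
  (fun θ : ℝ => F θ) =ᵐ[volume.restrict (Set.Ioc (-π : ℝ) π)] fun θ => (f θ : ℂ)

lemma hIoc : Set.Ioc (-π : ℝ) (-π + 2 * π) = Set.Ioc (-π : ℝ) π := by
  congr 1
  ring

lemma exists_lp (f : ℝ → ℝ) (hf : MemLp f 2 (volume.restrict (Set.Ioc (-π : ℝ) π))) :
    ∃ F : Lp ℂ 2 (@haarAddCircle (2 * π) _), Pr f (F : AddCircle (2 * π) → ℂ) := by
  obtain ⟨f', hf'meas, hff'⟩ := hf.aestronglyMeasurable
  have hf'mem : MemLp f' 2 (volume.restrict (Set.Ioc (-π : ℝ) π)) :=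
    (memLp_congr_ae hff').mp hf
  set F : AddCircle (2 * π) → ℂ := fun x => ((liftIoc (2 * π) (-π) f' x : ℝ) : ℂ) with hFdef
  have hFmeas : Measurable F := by
    have h1 : Measurable (liftIoc (2 * π) (-π) f') :=
      (hf'meas.measurable.comp measurable_subtype_coe).comp
        (measurableEquivIoc (2 * π) (-π)).measurable
    exact Complex.measurable_ofReal.comp h1
  have hmk : MeasurePreserving ((↑) : ℝ → AddCircle (2 * π))
      (volume.restrict (Set.Ioc (-π) (-π + 2 * π))) volume :=
    AddCircle.measurePreserving_mk (2 * π) (-π)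
  have hcomp : (fun θ : ℝ => F θ) =ᵐ[volume.restrict (Set.Ioc (-π : ℝ) π)]
      fun θ => (f θ : ℂ) := by
    have h1 : ∀ θ ∈ Set.Ioc (-π : ℝ) π, (fun θ : ℝ => F θ) θ = (f' θ : ℂ) := by
      intro θ hθ
      have hθ' : θ ∈ Set.Ioc (-π : ℝ) (-π + 2 * π) := by rwa [hIoc]
      simp only [hFdef]
      rw [liftIoc_coe_apply hθ']
    have h2 : (fun θ : ℝ => F θ) =ᵐ[volume.restrict (Set.Ioc (-π : ℝ) π)]
        fun θ => (f' θ : ℂ) :=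
      (ae_restrict_iff' measurableSet_Ioc).mpr (Filter.Eventually.of_forall h1)
    refine h2.trans ?_
    filter_upwards [hff'] with θ h
    rw [h]
  have hFvol : MemLp F 2 (volume : Measure (AddCircle (2 * π))) := by
    rw [← hmk.map_eq]
    refine (memLp_map_measure_iff hFmeas.aestronglyMeasurable
      hmk.measurable.aemeasurable).mpr ?_
    rw [hIoc]
    exact (memLp_congr_ae hcomp).mpr hf.ofReal
  have hle : (@haarAddCircle (2 * π) _) ≤ (volume : Measure (AddCircle (2 * π))) := by
    rw [volume_eq_smul_haarAddCircle]
    intro s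
    rw [Measure.smul_apply, smul_eq_mul]
    refine le_mul_of_one_le_left zero_le ?_
    rw [ENNReal.one_le_ofReal]
    nlinarith [pi_gt_three]
  have hhaar : MemLp F 2 (@haarAddCircle (2 * π) _) := hFvol.mono_measure hle
  refine ⟨hhaar.toLp F, ?_⟩
  have hae : (hhaar.toLp F : AddCircle (2 * π) → ℂ)
      =ᵐ[volume] F := by
    rw [volume_eq_smul_haarAddCircle]
    exact Measure.ae_smul_measure hhaar.coeFn_toLp _
  rw [← hmk.map_eq] at hae
  have hae2 := ae_eq_comp hmk.measurable.aemeasurable hae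
  rw [hIoc] at hae2
  exact hae2.trans hcomp

lemma coef_eq {f : ℝ → ℝ} {F : AddCircle (2 * π) → ℂ} (h : Pr f F) (n : ℤ) :
    fourierCoeff F n = fourierCoef f n := by
  rw [fourierCoeff_eq_intervalIntegral F n (-π), fourierCoef]
  rw [show (-π + 2 * π : ℝ) = π by ring]
  have hle : (-π : ℝ) ≤ π := by linarith [pi_pos]
  rw [intervalIntegral.integral_of_le hle, intervalIntegral.integral_of_le hle]
  have hcongr : ∫ x in Set.Ioc (-π : ℝ) π, fourier (-n) (x : AddCircle (2 * π)) • F x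
      = ∫ x in Set.Ioc (-π : ℝ) π, (f x : ℂ) * Complex.exp (-Complex.I * n * x) := by
    refine integral_congr_ae ?_
    filter_upwards [h] with x hx
    rw [smul_eq_mul, hx, mul_comm, fourier_coe_apply]
    have hpi : (2 * (π : ℂ)) ≠ 0 := by
      simpa using Complex.ofReal_ne_zero.mpr pi_ne_zero
    congr 1
    congr 1
    push_cast
    rw [div_eq_iff hpi]
    ring
  rw [hcongr, Complex.real_smul]

lemma inner_tsum (F₁ F₂ : Lp ℂ 2 (@haarAddCircle (2 * π) _)) :
    (inner ℂ F₁ F₂ : ℂ) =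
      ∑' n : ℤ, (starRingEnd ℂ) (fourierCoeff (F₁ : AddCircle (2 * π) → ℂ) n) *
        fourierCoeff (F₂ : AddCircle (2 * π) → ℂ) n := by
  rw [← fourierBasis.repr.inner_map_map F₁ F₂, lp.inner_eq_tsum]
  congr 1
  ext n
  rw [fourierBasis_repr, fourierBasis_repr, RCLike.inner_apply, mul_comm]

lemma inner_eq {f₁ f₂ : ℝ → ℝ} (F₁ F₂ : Lp ℂ 2 (@haarAddCircle (2 * π) _))
    (h₁ : Pr f₁ (F₁ : AddCircle (2 * π) → ℂ)) (h₂ : Pr f₂ (F₂ : AddCircle (2 * π) → ℂ)) :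
    (inner ℂ F₁ F₂ : ℂ) =
      (((1 / (2 * π)) * ∫ θ in (-π : ℝ)..π, f₁ θ * f₂ θ : ℝ) : ℂ) := by
  rw [MeasureTheory.L2.inner_def]
  simp_rw [RCLike.inner_apply, mul_comm ((F₂ : AddCircle (2 * π) → ℂ) _)]
  have hvol : ∫ a : AddCircle (2 * π), (starRingEnd ℂ) (F₁ a) * F₂ a ∂(volume)
      = (2 * π) • ∫ a : AddCircle (2 * π), (starRingEnd ℂ) (F₁ a) * F₂ a ∂haarAddCircle := by
    rw [volume_eq_smul_haarAddCircle, MeasureTheory.integral_smul_measure,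
      ENNReal.toReal_ofReal (by positivity : (0:ℝ) ≤ 2 * π)]
  have hhaar : ∫ a : AddCircle (2 * π), (starRingEnd ℂ) (F₁ a) * F₂ a ∂haarAddCircle
      = (1 / (2 * π) : ℝ) • ∫ a : AddCircle (2 * π), (starRingEnd ℂ) (F₁ a) * F₂ a ∂(volume) := by
    rw [hvol, smul_smul]
    rw [show (1 / (2 * π) : ℝ) * (2 * π) = 1 by field_simp]
    rw [one_smul]
  rw [hhaar]
  have hpre : ∫ a : AddCircle (2 * π), (starRingEnd ℂ) (F₁ a) * F₂ a ∂(volume)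
      = ∫ θ in Set.Ioc (-π : ℝ) π, (starRingEnd ℂ) (F₁ (θ : AddCircle (2 * π))) * F₂ θ := by
    rw [← AddCircle.integral_preimage (2 * π) (-π)
      (fun a : AddCircle (2 * π) => (starRingEnd ℂ) (F₁ a) * F₂ a), hIoc]
  rw [hpre]
  have hcongr : ∫ θ in Set.Ioc (-π : ℝ) π, (starRingEnd ℂ) (F₁ (θ : AddCircle (2 * π))) * F₂ θ
      = ∫ θ in Set.Ioc (-π : ℝ) π, ((f₁ θ * f₂ θ : ℝ) : ℂ) := by
    refine integral_congr_ae ?_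
    filter_upwards [h₁, h₂] with θ hθ₁ hθ₂
    rw [hθ₁, hθ₂, Complex.conj_ofReal]
    push_cast
    ring
  have hle : (-π : ℝ) ≤ π := by linarith [pi_pos]
  rw [hcongr, Complex.real_smul, intervalIntegral.integral_of_le hle,
    Complex.ofReal_mul]
  congr 1
  exact _root_.integral_ofReal


lemma coef0 (v : ℝ → ℝ) (hv : ContDiff ℝ 1 v) (hvper : ∀ θ, v (θ + 2 * π) = v θ) :
    fourierCoef (deriv v) 0 = 0 := by
  have hv' : Continuous (deriv v) := (hv.iterate_deriv' 0 1).continuous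
  have hvb : v π = v (-π) := by
    have h := hvper (-π); rw [show -π + 2 * π = π from by ring] at h; exact h
  rw [fourierCoef]
  simp only [Int.cast_zero, mul_zero, zero_mul, Complex.exp_zero, mul_one]
  have : (∫ θ in (-π : ℝ)..π, ((deriv v θ : ℝ) : ℂ)) =
      ((∫ θ in (-π : ℝ)..π, deriv v θ : ℝ) : ℂ) := intervalIntegral.integral_ofReal
  rw [this, intervalIntegral.integral_deriv_eq_sub
    (fun x _ => (hv.differentiable one_ne_zero).differentiableAt)
    (hv'.intervalIntegrable _ _), hvb, sub_self]
  simp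

end Stmt17Aux

open Stmt17Aux AddCircle in
/-- Gradient with respect to the Kähler inner product `b₂(a,b) = ⟨a, 𝓗b'⟩` of a
functional with `L²`-functional derivative `g`: if `g` is continuous and
`2π`-periodic, `v` is `C¹` and `2π`-periodic, the antiderivative
`G(θ) = ∫₀^θ g` is `2π`-periodic, and `w = 𝓗G`, `z = 𝓗v'` are characterized by
their Fourier coefficients, then `(1/2π)∫ g·v = −(1/2π)∫ w·z`; hence the
`b₂`-gradient is `−𝓗(∫₀^θ g)`. -/
theorem stmt_17 (g v w z : ℝ → ℝ)
    (hg : Continuous g) (hv : ContDiff ℝ 1 v)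
    (hgper : ∀ θ, g (θ + 2 * π) = g θ) (hvper : ∀ θ, v (θ + 2 * π) = v θ)
    (hGper : ∀ θ, (∫ s in (0 : ℝ)..(θ + 2 * π), g s) = ∫ s in (0 : ℝ)..θ, g s)
    (hwper : ∀ θ, w (θ + 2 * π) = w θ) (hzper : ∀ θ, z (θ + 2 * π) = z θ)
    (hwL2 : MemLp w 2 (volume.restrict (Set.Ioc (-π : ℝ) π)))
    (hzL2 : MemLp z 2 (volume.restrict (Set.Ioc (-π : ℝ) π)))
    (hw : ∀ n : ℤ, fourierCoef w n =
      -Complex.I * (n.sign : ℂ) *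
        fourierCoef (fun θ => ∫ s in (0 : ℝ)..θ, g s) n)
    (hz : ∀ n : ℤ, fourierCoef z n =
      -Complex.I * (n.sign : ℂ) * fourierCoef (deriv v) n) :
    (1 / (2 * π)) * ∫ θ in (-π : ℝ)..π, g θ * v θ =
      -((1 / (2 * π)) * ∫ θ in (-π : ℝ)..π, w θ * z θ) := by
  -- notation
  set G : ℝ → ℝ := fun θ => ∫ s in (0 : ℝ)..θ, g s with hGdef
  have hv' : Continuous (deriv v) := (hv.iterate_deriv' 0 1).continuous
  have hGderiv : ∀ x : ℝ, HasDerivAt G (g x) x := fun x =>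
    (hg.integral_hasStrictDerivAt 0 x).hasDerivAt
  have hGcont : Continuous G := by
    refine continuous_iff_continuousAt.mpr fun x => (hGderiv x).continuousAt
  -- Step 1: integration by parts
  have step1 : (∫ θ in (-π : ℝ)..π, g θ * v θ) =
      -∫ θ in (-π : ℝ)..π, G θ * deriv v θ := by
    have hdv : ∀ x : ℝ, HasDerivAt v (deriv v x) x := fun x =>
      (hv.differentiable one_ne_zero).differentiableAt.hasDerivAt
    have key := intervalIntegral.integral_mul_deriv_eq_deriv_mul (a := (-π : ℝ)) (b := π)
      (u := G) (v := v) (u' := g) (v' := deriv v)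
      (fun x _ => hGderiv x) (fun x _ => hdv x)
      (hg.intervalIntegrable _ _) (hv'.intervalIntegrable _ _)
    have hGb : G π = G (-π) := by
      have h := hGper (-π); rw [show -π + 2 * π = π from by ring] at h; exact h
    have hvb : v π = v (-π) := by
      have h := hvper (-π); rw [show -π + 2 * π = π from by ring] at h; exact h
    rw [hGb, hvb] at key
    linarith [key]
  -- MemLp facts for continuous functions
  haveI : IsFiniteMeasure (volume.restrict (Set.Ioc (-π : ℝ) π)) := by
    constructor
    rw [Measure.restrict_apply_univ, Real.volume_Ioc]
    exact ENNReal.ofReal_lt_top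
  have hmemcont : ∀ f : ℝ → ℝ, Continuous f →
      MemLp f 2 (volume.restrict (Set.Ioc (-π : ℝ) π)) := by
    intro f hf
    obtain ⟨C, hC⟩ := (isCompact_Icc (a := (-π : ℝ)) (b := π)).exists_bound_of_continuousOn
      hf.continuousOn
    refine MemLp.of_bound hf.aestronglyMeasurable C ?_
    refine (ae_restrict_iff' measurableSet_Ioc).mpr (Filter.Eventually.of_forall ?_)
    intro x hx
    exact hC x ⟨le_of_lt hx.1, hx.2⟩
  -- Lp elements
  obtain ⟨Fw, hPw⟩ := exists_lp w hwL2
  obtain ⟨Fz, hPz⟩ := exists_lp z hzL2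
  obtain ⟨FG, hPG⟩ := exists_lp G (hmemcont G hGcont)
  obtain ⟨Fv, hPv⟩ := exists_lp (deriv v) (hmemcont _ hv')
  -- termwise equality of Fourier coefficients products
  have hterm : ∀ n : ℤ,
      (starRingEnd ℂ) (fourierCoeff (Fw : AddCircle (2 * π) → ℂ) n) *
        fourierCoeff (Fz : AddCircle (2 * π) → ℂ) n =
      (starRingEnd ℂ) (fourierCoeff (FG : AddCircle (2 * π) → ℂ) n) *
        fourierCoeff (Fv : AddCircle (2 * π) → ℂ) n := by
    intro n
    rw [coef_eq hPw, coef_eq hPz, coef_eq hPG, coef_eq hPv, hw n, hz n]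
    by_cases hn : n = 0
    · subst hn
      rw [coef0 v hv hvper]
      simp
    · have hs : ((n.sign : ℤ) : ℂ) * ((n.sign : ℤ) : ℂ) = 1 := by
        rcases lt_trichotomy n 0 with h | h | h
        · rw [Int.sign_eq_neg_one_iff_neg.mpr h]; norm_num
        · exact absurd h hn
        · rw [Int.sign_eq_one_iff_pos.mpr h]; norm_num
      set a := fourierCoef G n
      set b := fourierCoef (deriv v) n
      rw [map_mul, map_mul, Complex.conj_neg_I, map_intCast]
      have hI : Complex.I * -Complex.I = 1 := by
        rw [mul_neg, Complex.I_mul_I, neg_neg]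
      calc Complex.I * ((n.sign : ℤ) : ℂ) * (starRingEnd ℂ) a *
            (-Complex.I * ((n.sign : ℤ) : ℂ) * b)
          = (Complex.I * -Complex.I) * (((n.sign : ℤ) : ℂ) * ((n.sign : ℤ) : ℂ)) *
            ((starRingEnd ℂ) a * b) := by ring
        _ = (starRingEnd ℂ) a * b := by rw [hI, hs, one_mul, one_mul]
  -- Parseval
  have hinner : (inner ℂ Fw Fz : ℂ) = (inner ℂ FG Fv : ℂ) := by
    rw [inner_tsum, inner_tsum]
    exact tsum_congr hterm
  rw [inner_eq Fw Fz hPw hPz, inner_eq FG Fv hPG hPv] at hinner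
  have hreal : (1 / (2 * π)) * (∫ θ in (-π : ℝ)..π, w θ * z θ) =
      (1 / (2 * π)) * ∫ θ in (-π : ℝ)..π, G θ * deriv v θ :=
    Complex.ofReal_injective hinner
  rw [step1, hreal]
  ring
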